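/- Let f(z) = Σ_{k≥0} a_k z^k be analytic on the unit disk with |f(z)| ≤ 1, and let p ∈ (0,2]. Then for all r with 0 ≤ r ≤ (−1 + √(1+2p))/2 (the minimal positive root of p = 2r(1+r)), the inequality |a_0|^p + |a_1| r + |a_2| r² + |a_1|² r²/(1+|a_0|) ≤ 1 holds. -/

import Mathlib

open Metric Complex Filter Topology

lemma mobius_denom_ne {w v : ℂ} (hw : ‖w‖ < 1) (hv : ‖v‖ ≤ 1) :
    1 - (starRingEnd ℂ) w * v ≠ 0 := by
  intro h
  have h1 : (1 : ℂ) = (starRingEnd ℂ) w * v := by linear_combination h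
  have : (1:ℝ) = ‖(starRingEnd ℂ) w * v‖ := by rw [← h1]; simp
  rw [norm_mul] at this
  have hcw : ‖(starRingEnd ℂ) w‖ = ‖w‖ := RCLike.norm_conj w
  nlinarith [norm_nonneg v, norm_nonneg w]

lemma mobius_key (w v : ℂ) :
    ‖1 - (starRingEnd ℂ) w * v‖ ^ 2 - ‖v - w‖ ^ 2 = (1 - ‖w‖ ^ 2) * (1 - ‖v‖ ^ 2) := by
  have e1 : ‖1 - (starRingEnd ℂ) w * v‖ ^ 2 = Complex.normSq (1 - (starRingEnd ℂ) w * v) := by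
    rw [← Complex.sq_norm]
  have e2 : ‖v - w‖ ^ 2 = Complex.normSq (v - w) := by rw [← Complex.sq_norm]
  have e3 : ‖w‖ ^ 2 = Complex.normSq w := by rw [← Complex.sq_norm]
  have e4 : ‖v‖ ^ 2 = Complex.normSq v := by rw [← Complex.sq_norm]
  rw [e1, e2, e3, e4]
  simp only [Complex.normSq_apply, Complex.sub_re, Complex.sub_im, Complex.mul_re, Complex.mul_im,
    Complex.one_re, Complex.one_im, Complex.conj_re, Complex.conj_im]
  ring

lemma mobius_lt_one {w v : ℂ} (hw : ‖w‖ < 1) (hv : ‖v‖ < 1) :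
    ‖(v - w) / (1 - (starRingEnd ℂ) w * v)‖ < 1 := by
  have hne := mobius_denom_ne hw hv.le
  have hpos : (0:ℝ) < ‖1 - (starRingEnd ℂ) w * v‖ := norm_pos_iff.mpr hne
  rw [norm_div, div_lt_one hpos]
  have hk := mobius_key w v
  by_contra hcon
  push_neg at hcon
  have h2 := mul_self_le_mul_self hpos.le hcon
  have hw2 : ‖w‖ * ‖w‖ < 1 := by nlinarith [norm_nonneg w]
  have hv2 : ‖v‖ * ‖v‖ < 1 := by nlinarith [norm_nonneg v]
  nlinarith [hw2, hv2]

lemma bohr_series (f : ℂ → ℂ) (a : ℕ → ℂ)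
    (hf : ∀ z : ℂ, ‖z‖ < 1 → HasSum (fun k : ℕ => a k * z ^ k) (f z)) :
    HasFPowerSeriesOnBall f (FormalMultilinearSeries.ofScalars ℂ a) 0 1 := by
  constructor
  · refine ENNReal.le_of_forall_nnreal_lt fun q hq => ?_
    rw [ENNReal.coe_lt_one_iff, ← NNReal.coe_lt_one] at hq
    set s : ℝ := (1 + (q : ℝ)) / 2 with hs
    have hq0 : (0:ℝ) ≤ q := q.coe_nonneg
    have hs0 : 0 < s := by positivity
    have hs1 : s < 1 := by simp only [hs]; linarith
    have hqs : (q : ℝ) ≤ s := by simp only [hs]; linarith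
    have hsum := hf (s : ℂ) (by simpa [Complex.norm_real, abs_of_pos hs0] using hs1)
    have htend : Filter.Tendsto (fun n => ‖a n‖ * s ^ n) Filter.atTop (nhds 0) := by
      have h1 := hsum.summable.tendsto_atTop_zero.norm
      simp only [norm_zero] at h1
      refine h1.congr fun n => ?_
      rw [norm_mul, norm_pow, Complex.norm_real, Real.norm_eq_abs, abs_of_pos hs0]
    apply FormalMultilinearSeries.le_radius_of_tendsto _ (l := 0)
    apply squeeze_zero (fun n => by positivity) (g := fun n => ‖a n‖ * s ^ n) _ htend
    intro n
    rw [FormalMultilinearSeries.ofScalars_norm]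
    exact mul_le_mul_of_nonneg_left (pow_le_pow_left₀ hq0 hqs n) (norm_nonneg _)
  · exact one_pos
  · intro y hy
    rw [mem_emetric_ball_zero_iff, ← ofReal_norm, ENNReal.ofReal_lt_one] at hy
    rw [zero_add]
    have h2 := hf y hy
    refine HasSum.congr_fun h2 fun n => ?_
    rw [FormalMultilinearSeries.ofScalars_apply_eq, smul_eq_mul]

set_option maxHeartbeats 1000000 in
lemma coeff_bounds (f : ℂ → ℂ) (a : ℕ → ℂ)
    (hf : ∀ z : ℂ, ‖z‖ < 1 → HasSum (fun k : ℕ => a k * z ^ k) (f z))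
    (hb : ∀ z : ℂ, ‖z‖ < 1 → ‖f z‖ ≤ 1) :
    ‖a 0‖ ≤ 1 ∧ ‖a 1‖ ≤ 1 - ‖a 0‖ ^ 2 ∧
      ‖a 2‖ + ‖a 1‖ ^ 2 / (1 + ‖a 0‖) ≤ 1 - ‖a 0‖ ^ 2 := by
  have hP := bohr_series f a hf
  have hPat := hP.hasFPowerSeriesAt
  have hcoeff1 : a 1 = deriv f 0 := by
    rw [hPat.deriv, FormalMultilinearSeries.apply_eq_pow_smul_coeff]
    have : (FormalMultilinearSeries.ofScalars ℂ a).coeff 1 = a 1 := by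
      show ((FormalMultilinearSeries.ofScalars ℂ a) 1 fun _ => (1:ℂ)) = a 1
      rw [FormalMultilinearSeries.ofScalars_apply_eq]; simp
    rw [this]; simp
  have hds := hPat.has_fpower_series_dslope_fslope
  have hcoeff2 : a 2 = deriv (dslope f 0) 0 := by
    rw [hds.deriv, FormalMultilinearSeries.apply_eq_pow_smul_coeff,
      FormalMultilinearSeries.coeff_fslope]
    have : (FormalMultilinearSeries.ofScalars ℂ a).coeff 2 = a 2 := by
      show ((FormalMultilinearSeries.ofScalars ℂ a) 2 fun _ => (1:ℂ)) = a 2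
      rw [FormalMultilinearSeries.ofScalars_apply_eq]; simp
    rw [this]; simp
  have hf0 : f 0 = a 0 := by
    have := (hP.coeff_zero (fun _ => 0)).symm
    rwa [FormalMultilinearSeries.ofScalars_apply_eq, pow_zero, smul_eq_mul, mul_one] at this
  have hball : Metric.eball (0:ℂ) 1 = Metric.ball (0:ℂ) 1 := by
    rw [← Metric.emetric_ball (x := (0:ℂ)) (ε := 1), ENNReal.ofReal_one]
  have hd : DifferentiableOn ℂ f (ball (0:ℂ) 1) := hball ▸ hP.differentiableOn
  have h0mem : (0:ℂ) ∈ ball (0:ℂ) 1 := mem_ball_self one_pos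
  have ha0 : ‖a 0‖ ≤ 1 := hf0 ▸ hb 0 (by simp)
  have ha0n : (0:ℝ) ≤ ‖a 0‖ := norm_nonneg _
  by_cases hcon : ∃ z ∈ ball (0:ℂ) 1, ‖f z‖ = 1
  · obtain ⟨z0, hz0, hz0e⟩ := hcon
    have hmax : IsMaxOn (norm ∘ f) (ball (0:ℂ) 1) z0 := by
      intro z hz
      simp only [Function.comp, Set.mem_setOf_eq, hz0e]
      exact hb z (mem_ball_zero_iff.mp hz)
    have heq := Complex.eqOn_of_isPreconnected_of_isMaxOn_norm
      (convex_ball (0:ℂ) 1).isPreconnected isOpen_ball hd hz0 hmax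
    have hderiv0 : deriv f 0 = 0 := by
      have hev : f =ᶠ[nhds 0] fun _ => f z0 := by
        filter_upwards [isOpen_ball.mem_nhds h0mem] with z hz using heq hz
      rw [hev.deriv_eq]; exact deriv_const _ _
    have ha1 : a 1 = 0 := by rw [hcoeff1, hderiv0]
    have hdsev : dslope f 0 =ᶠ[nhds 0] fun _ => (0:ℂ) := by
      filter_upwards [isOpen_ball.mem_nhds h0mem] with z hz
      rcases eq_or_ne z 0 with rfl | hzne
      · rw [dslope_same, hderiv0]
      · rw [dslope_of_ne _ hzne, slope_def_field, heq hz, heq h0mem]; simp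
    have ha2 : a 2 = 0 := by rw [hcoeff2, hdsev.deriv_eq, deriv_const]
    refine ⟨ha0, ?_, ?_⟩
    · rw [ha1]; simp only [norm_zero]; nlinarith
    · rw [ha1, ha2]; simp only [norm_zero]
      rw [zero_pow (by norm_num), zero_div]
      nlinarith
  · push_neg at hcon
    have hflt : ∀ z ∈ ball (0:ℂ) 1, ‖f z‖ < 1 := fun z hz =>
      lt_of_le_of_ne (hb z (mem_ball_zero_iff.mp hz)) (hcon z hz)
    have ha0lt : ‖a 0‖ < 1 := hf0 ▸ hflt 0 h0mem
    set A : ℂ := (starRingEnd ℂ) (a 0) with hA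
    set D : ℂ → ℂ := fun z => 1 - A * f z with hDdef
    have hDne : ∀ z ∈ ball (0:ℂ) 1, D z ≠ 0 := fun z hz =>
      mobius_denom_ne ha0lt (hb z (mem_ball_zero_iff.mp hz))
    have hD0 : D 0 = ((1 - ‖a 0‖ ^ 2 : ℝ) : ℂ) := by
      simp only [hDdef, hf0, hA]
      rw [mul_comm, Complex.mul_conj, Complex.normSq_eq_norm_sq]
      push_cast
      rfl
    have hD0ne : D 0 ≠ 0 := hDne 0 h0mem
    have hD0norm : ‖D 0‖ = 1 - ‖a 0‖ ^ 2 := by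
      rw [hD0, Complex.norm_real, Real.norm_eq_abs]
      exact abs_of_nonneg (by nlinarith)
    set g : ℂ → ℂ := fun z => (f z - a 0) / D z with hgdef
    have hDd : DifferentiableOn ℂ D (ball (0:ℂ) 1) :=
      (differentiableOn_const 1).sub ((differentiableOn_const A).mul hd)
    have hgd : DifferentiableOn ℂ g (ball (0:ℂ) 1) := (hd.sub_const _).div hDd hDne
    have hg0 : g 0 = 0 := by simp [hgdef, hf0]
    have hglt : ∀ z ∈ ball (0:ℂ) 1, ‖g z‖ < 1 := fun z hz =>
      mobius_lt_one ha0lt (hflt z hz)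
    have hmaps : Set.MapsTo g (ball (0:ℂ) 1) (ball (g 0) 1) := by
      rw [hg0]; intro z hz; rw [mem_ball_zero_iff]; exact hglt z hz
    set G1 : ℂ → ℂ := dslope g 0 with hG1def
    have hG1le : ∀ z ∈ ball (0:ℂ) 1, ‖G1 z‖ ≤ 1 := fun z hz => by
      simpa using Complex.norm_dslope_le_div_of_mapsTo_ball hgd (hmaps.mono_right ball_subset_closedBall) hz
    have hG1d : DifferentiableOn ℂ G1 (ball (0:ℂ) 1) :=
      (differentiableOn_dslope (isOpen_ball.mem_nhds h0mem)).mpr hgd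
    set c1 : ℂ := G1 0 with hc1def
    have hc1le : ‖c1‖ ≤ 1 := hG1le 0 h0mem
    set F1 : ℂ → ℂ := dslope f 0 with hF1def
    have hF1d : DifferentiableOn ℂ F1 (ball (0:ℂ) 1) :=
      (differentiableOn_dslope (isOpen_ball.mem_nhds h0mem)).mpr hd
    set F2 : ℂ → ℂ := dslope F1 0 with hF2def
    have hF2d : DifferentiableOn ℂ F2 (ball (0:ℂ) 1) :=
      (differentiableOn_dslope (isOpen_ball.mem_nhds h0mem)).mpr hF1d
    set G2 : ℂ → ℂ := dslope G1 0 with hG2def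
    have hG2d : DifferentiableOn ℂ G2 (ball (0:ℂ) 1) :=
      (differentiableOn_dslope (isOpen_ball.mem_nhds h0mem)).mpr hG1d
    set c2 : ℂ := G2 0 with hc2def
    have hF10 : F1 0 = a 1 := by rw [hF1def, dslope_same, ← hcoeff1]
    have hF20 : F2 0 = a 2 := by rw [hF2def, hF1def, dslope_same, ← hcoeff2]
    have hfz : ∀ z : ℂ, z ≠ 0 → f z = a 0 + z * F1 z := by
      intro z hzne
      rw [hF1def, dslope_of_ne _ hzne, slope_def_field, hf0, sub_zero]
      field_simp
      ring
    have hF1z : ∀ z : ℂ, z ≠ 0 → F1 z = a 1 + z * F2 z := by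
      intro z hzne
      rw [hF2def, dslope_of_ne _ hzne, slope_def_field, hF10, sub_zero]
      field_simp
      ring
    have hI1 : ∀ z ∈ ball (0:ℂ) 1, z ≠ 0 → G1 z = F1 z / D z := by
      intro z hz hzne
      have e1 : f z - a 0 = z * F1 z := by rw [hfz z hzne]; ring
      rw [hG1def, dslope_of_ne _ hzne, slope_def_field, hg0, sub_zero, sub_zero, hgdef]
      simp only []
      rw [e1]
      field_simp [hzne, hDne z hz]
    have hcF1 : ContinuousAt F1 0 := (hF1d.differentiableAt (isOpen_ball.mem_nhds h0mem)).continuousAt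
    have hcF2 : ContinuousAt F2 0 := (hF2d.differentiableAt (isOpen_ball.mem_nhds h0mem)).continuousAt
    have hcG1 : ContinuousAt G1 0 := (hG1d.differentiableAt (isOpen_ball.mem_nhds h0mem)).continuousAt
    have hcG2 : ContinuousAt G2 0 := (hG2d.differentiableAt (isOpen_ball.mem_nhds h0mem)).continuousAt
    have hcD : ContinuousAt D 0 := (hDd.differentiableAt (isOpen_ball.mem_nhds h0mem)).continuousAt
    have hballev : ∀ᶠ z in nhdsWithin (0:ℂ) {(0:ℂ)}ᶜ, z ∈ ball (0:ℂ) 1 ∧ z ≠ 0 := by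
      filter_upwards [mem_nhdsWithin_of_mem_nhds (isOpen_ball.mem_nhds h0mem),
        self_mem_nhdsWithin] with z h1 h2
      exact ⟨h1, h2⟩
    have hkey1 : c1 = a 1 / D 0 := by
      have t1 : Tendsto G1 (nhdsWithin (0:ℂ) {(0:ℂ)}ᶜ) (nhds c1) :=
        hcG1.continuousWithinAt.tendsto
      have t2 : Tendsto (fun z => F1 z / D z) (nhdsWithin (0:ℂ) {(0:ℂ)}ᶜ) (nhds (a 1 / D 0)) := by
        have hq : ContinuousAt (fun z => F1 z / D z) 0 := hcF1.div hcD hD0ne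
        have t2' := (hq.continuousWithinAt (s := {(0:ℂ)}ᶜ)).tendsto
        simpa only [hF10] using t2'
      refine tendsto_nhds_unique (t1.congr' ?_) t2
      filter_upwards [hballev] with z hz using hI1 z hz.1 hz.2
    have hI2 : ∀ z ∈ ball (0:ℂ) 1, z ≠ 0 →
        G2 z = F2 z / D z + A * a 1 * F1 z / (D z * D 0) := by
      intro z hz hzne
      have hDzne := hDne z hz
      have eD : D z = D 0 - A * (z * F1 z) := by
        simp only [hDdef, hf0]
        rw [hfz z hzne]
        ring
      have e2 : F1 z = a 1 + z * F2 z := hF1z z hzne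
      rw [hG2def, dslope_of_ne _ hzne, slope_def_field, sub_zero, ← hc1def,
        hI1 z hz hzne, hkey1]
      rw [eD, e2] at hDzne ⊢
      rw [div_add_div _ _ hDzne (mul_ne_zero hDzne hD0ne), div_sub_div _ _ hDzne hD0ne, div_div,
        div_eq_div_iff (mul_ne_zero (mul_ne_zero hDzne hD0ne) hzne)
          (mul_ne_zero hDzne (mul_ne_zero hDzne hD0ne))]
      ring
    have hkey2 : c2 = a 2 / D 0 + A * a 1 * a 1 / (D 0 * D 0) := by
      have t1 : Tendsto G2 (nhdsWithin (0:ℂ) {(0:ℂ)}ᶜ) (nhds c2) :=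
        hcG2.continuousWithinAt.tendsto
      have t2 : Tendsto (fun z => F2 z / D z + A * a 1 * F1 z / (D z * D 0))
          (nhdsWithin (0:ℂ) {(0:ℂ)}ᶜ) (nhds (a 2 / D 0 + A * a 1 * a 1 / (D 0 * D 0))) := by
        have hc : ContinuousAt (fun z => F2 z / D z + A * a 1 * F1 z / (D z * D 0)) 0 :=
          (hcF2.div hcD hD0ne).add
            (((continuousAt_const.mul hcF1)).div ((hcD.mul continuousAt_const)) (by
              simpa using mul_ne_zero hD0ne hD0ne))
        have t2' := (hc.continuousWithinAt (s := {(0:ℂ)}ᶜ)).tendsto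
        simpa only [hF20, hF10] using t2'
      refine tendsto_nhds_unique (t1.congr' ?_) t2
      filter_upwards [hballev] with z hz using hI2 z hz.1 hz.2
    have ha1eq : a 1 = c1 * D 0 := by rw [hkey1]; field_simp
    have ha2eq : a 2 = D 0 * (c2 - A * c1 ^ 2) := by
      have h2 : c2 * (D 0 * D 0) = a 2 * D 0 + A * a 1 * a 1 := by
        rw [hkey2]; field_simp
      have h3 : a 2 * D 0 = D 0 * (c2 - A * c1 ^ 2) * D 0 := by
        rw [ha1eq] at h2; linear_combination -h2
      exact mul_right_cancel₀ hD0ne h3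
    -- bound ‖c2‖ ≤ 1 - ‖c1‖ ^ 2
    have hc2le : ‖c2‖ ≤ 1 - ‖c1‖ ^ 2 := by
      by_cases hG1con : ∃ z ∈ ball (0:ℂ) 1, ‖G1 z‖ = 1
      · obtain ⟨z1, hz1, hz1e⟩ := hG1con
        have hmax : IsMaxOn (norm ∘ G1) (ball (0:ℂ) 1) z1 := by
          intro z hz
          simp only [Function.comp, Set.mem_setOf_eq, hz1e]
          exact hG1le z hz
        have heq := Complex.eqOn_of_isPreconnected_of_isMaxOn_norm
          (convex_ball (0:ℂ) 1).isPreconnected isOpen_ball hG1d hz1 hmax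
        have hc1n : ‖c1‖ = 1 := by rw [hc1def, heq h0mem]; exact hz1e
        have hc20 : c2 = 0 := by
          have hev : G1 =ᶠ[nhds 0] fun _ => G1 z1 := by
            filter_upwards [isOpen_ball.mem_nhds h0mem] with z hz using heq hz
          rw [hc2def, hG2def, dslope_same, hev.deriv_eq, deriv_const]
        rw [hc20, hc1n]; simp
      · push_neg at hG1con
        have hG1lt : ∀ z ∈ ball (0:ℂ) 1, ‖G1 z‖ < 1 := fun z hz =>
          lt_of_le_of_ne (hG1le z hz) (hG1con z hz)
        have hc1lt : ‖c1‖ < 1 := hG1lt 0 h0mem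
        set B : ℂ := (starRingEnd ℂ) c1 with hBdef
        set E : ℂ → ℂ := fun z => 1 - B * G1 z with hEdef
        have hEne : ∀ z ∈ ball (0:ℂ) 1, E z ≠ 0 := fun z hz =>
          mobius_denom_ne hc1lt (hG1le z hz)
        set h : ℂ → ℂ := fun z => (G1 z - c1) / E z with hhdef
        have hEd : DifferentiableOn ℂ E (ball (0:ℂ) 1) :=
          (differentiableOn_const 1).sub ((differentiableOn_const B).mul hG1d)
        have hhd : DifferentiableOn ℂ h (ball (0:ℂ) 1) := (hG1d.sub_const _).div hEd hEne
        have hh0 : h 0 = 0 := by simp [hhdef, ← hc1def]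
        have hhlt : ∀ z ∈ ball (0:ℂ) 1, ‖h z‖ < 1 := fun z hz =>
          mobius_lt_one hc1lt (hG1lt z hz)
        have hmapsh : Set.MapsTo h (ball (0:ℂ) 1) (ball (0:ℂ) 1) := fun z hz => by
          rw [mem_ball_zero_iff]; exact hhlt z hz
        have hsch : ∀ z ∈ ball (0:ℂ) 1, ‖h z‖ ≤ ‖z‖ := by
          intro z hz
          have := Complex.norm_le_norm_of_mapsTo_ball hhd (hmapsh.mono_right ball_subset_closedBall) hh0
            (mem_ball_zero_iff.mp hz)
          simpa using this
        have hE0 : E 0 = ((1 - ‖c1‖ ^ 2 : ℝ) : ℂ) := by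
          simp only [hEdef, hBdef, ← hc1def]
          rw [mul_comm, Complex.mul_conj, Complex.normSq_eq_norm_sq]
          push_cast
          rfl
        have hE0norm : ‖E 0‖ = 1 - ‖c1‖ ^ 2 := by
          rw [hE0, Complex.norm_real, Real.norm_eq_abs]
          exact abs_of_nonneg (by nlinarith [norm_nonneg c1])
        have hest : ∀ z ∈ ball (0:ℂ) 1, z ≠ 0 → ‖G2 z‖ ≤ ‖E z‖ := by
          intro z hz hzne
          have hEzne := hEne z hz
          have e : G2 z = h z * E z / z := by
            rw [hG2def, dslope_of_ne _ hzne, slope_def_field, sub_zero, ← hc1def, hhdef]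
            field_simp
          rw [e, norm_div, norm_mul]
          rw [div_le_iff₀ (by simpa [norm_pos_iff] using hzne : (0:ℝ) < ‖z‖)]
          have := hsch z hz
          nlinarith [norm_nonneg (E z), norm_nonneg (h z), norm_nonneg z]
        have t1 : Tendsto (fun z => ‖G2 z‖) (nhdsWithin (0:ℂ) {(0:ℂ)}ᶜ) (nhds ‖c2‖) :=
          (hcG2.norm.continuousWithinAt (s := {(0:ℂ)}ᶜ)).tendsto
        have hcE : ContinuousAt E 0 := (hEd.differentiableAt (isOpen_ball.mem_nhds h0mem)).continuousAt
        have t2 : Tendsto (fun z => ‖E z‖) (nhdsWithin (0:ℂ) {(0:ℂ)}ᶜ) (nhds (1 - ‖c1‖ ^ 2)) := by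
          have := (hcE.norm.continuousWithinAt (s := {(0:ℂ)}ᶜ)).tendsto
          rwa [hE0norm] at this
        refine le_of_tendsto_of_tendsto t1 t2 ?_
        filter_upwards [hballev] with z hz using hest z hz.1 hz.2
    -- final algebra
    have ha1norm : ‖a 1‖ = ‖c1‖ * (1 - ‖a 0‖ ^ 2) := by
      rw [ha1eq, norm_mul, hD0norm]
    have ha2norm : ‖a 2‖ ≤ (1 - ‖a 0‖ ^ 2) * (‖c2‖ + ‖a 0‖ * ‖c1‖ ^ 2) := by
      rw [ha2eq, norm_mul, hD0norm]
      have : ‖c2 - A * c1 ^ 2‖ ≤ ‖c2‖ + ‖a 0‖ * ‖c1‖ ^ 2 := by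
        refine (norm_sub_le _ _).trans ?_
        rw [norm_mul, norm_pow, hA, RCLike.norm_conj]
      have h1 : (0:ℝ) ≤ 1 - ‖a 0‖ ^ 2 := by nlinarith
      nlinarith [norm_nonneg (c2 - A * c1 ^ 2)]
    have hc1n : (0:ℝ) ≤ ‖c1‖ := norm_nonneg _
    have hc2n : (0:ℝ) ≤ ‖c2‖ := norm_nonneg _
    have hdenpos : (0:ℝ) < 1 + ‖a 0‖ := by linarith
    have hdiv : ‖a 1‖ ^ 2 / (1 + ‖a 0‖) = ‖c1‖ ^ 2 * ((1 - ‖a 0‖ ^ 2) * (1 - ‖a 0‖)) := by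
      rw [ha1norm]
      field_simp
      ring
    have hS : (0:ℝ) ≤ 1 - ‖a 0‖ ^ 2 := by nlinarith
    refine ⟨ha0, ?_, ?_⟩
    · rw [ha1norm]
      nlinarith [mul_le_mul_of_nonneg_right hc1le hS]
    · rw [hdiv]
      have hsum : ‖c2‖ + ‖a 0‖ * ‖c1‖ ^ 2 + (1 - ‖a 0‖) * ‖c1‖ ^ 2 ≤ 1 := by nlinarith
      nlinarith [mul_le_mul_of_nonneg_left hsum hS, ha2norm]

/-- The `n = 2` case of the truncated refined Bohr inequality:
`|a₀|^p + |a₁| r + |a₂| r² + |a₁|² r²/(1+|a₀|) ≤ 1` for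
`0 ≤ r ≤ (−1 + √(1+2p))/2`, the minimal positive root of `p = 2r(1+r)`. -/
theorem truncated_bohr_two (f : ℂ → ℂ) (a : ℕ → ℂ) (p : ℝ)
    (hf : ∀ z : ℂ, ‖z‖ < 1 → HasSum (fun k : ℕ => a k * z ^ k) (f z))
    (hb : ∀ z : ℂ, ‖z‖ < 1 → ‖f z‖ ≤ 1)
    (hp0 : 0 < p) (hp2 : p ≤ 2)
    (r : ℝ) (hr0 : 0 ≤ r) (hr : r ≤ (-1 + Real.sqrt (1 + 2 * p)) / 2) :
    ‖a 0‖ ^ p + ‖a 1‖ * r + ‖a 2‖ * r ^ 2 + ‖a 1‖ ^ 2 * r ^ 2 / (1 + ‖a 0‖) ≤ 1 := by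
  obtain ⟨h1, h2, h3⟩ := coeff_bounds f a hf hb
  set x := ‖a 0‖ with hx
  set b := ‖a 1‖ with hbv
  set c := ‖a 2‖ with hcv
  have hxn : (0:ℝ) ≤ x := norm_nonneg _
  have hbn : (0:ℝ) ≤ b := norm_nonneg _
  have hcn : (0:ℝ) ≤ c := norm_nonneg _
  have hxpos : (0:ℝ) < 1 + x := by linarith
  -- r + r^2 ≤ p / 2
  have hsq : Real.sqrt (1 + 2 * p) ^ 2 = 1 + 2 * p := Real.sq_sqrt (by linarith)
  have hrp : r + r ^ 2 ≤ p / 2 := by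
    have h21 : 2 * r + 1 ≤ Real.sqrt (1 + 2 * p) := by linarith
    nlinarith [hsq, h21, hr0]
  -- Bernoulli bound: x ^ p ≤ 1 - (p/2) * (1 - x^2)
  have hbern : x ^ p ≤ 1 - p / 2 * (1 - x ^ 2) := by
    have e1 : x ^ p = (x ^ 2) ^ (p / 2) := by
      rw [← Real.rpow_natCast x 2, ← Real.rpow_mul hxn]
      norm_num
      rw [show (2:ℝ) * (p / 2) = p by ring]
    have e2 : ((1 : ℝ) + (x ^ 2 - 1)) ^ (p / 2) ≤ 1 + p / 2 * (x ^ 2 - 1) :=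
      rpow_one_add_le_one_add_mul_self (by nlinarith) (by linarith) (by linarith)
    rw [e1]
    have e3 : (1 : ℝ) + (x ^ 2 - 1) = x ^ 2 := by ring
    rw [e3] at e2
    linarith
  have ht : b ^ 2 * r ^ 2 / (1 + x) = b ^ 2 / (1 + x) * r ^ 2 := by ring
  have htn : (0:ℝ) ≤ b ^ 2 / (1 + x) := by positivity
  have hS : (0:ℝ) ≤ 1 - x ^ 2 := by nlinarith
  rw [ht]
  nlinarith [mul_nonneg (sub_nonneg.mpr h2) hr0,
    mul_nonneg (by linarith : (0:ℝ) ≤ 1 - x ^ 2 - (c + b ^ 2 / (1 + x))) (sq_nonneg r),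
    mul_nonneg hS (by linarith : (0:ℝ) ≤ p / 2 - (r + r ^ 2))]
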